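/- For t = 0 (the Veronese type case): if u and v are monomials of degree d in n variables with all exponents at most c, and uv = x_{i_1}⋯x_{i_{2d}} with i_1 ≤ ... ≤ i_{2d}, then both x_{i_1}x_{i_3}⋯x_{i_{2d-1}} and x_{i_2}x_{i_4}⋯x_{i_{2d}} have all exponents at most c. In particular each exponent of the sorted monomials is at most the ceiling of (deg_{x_i}(u) + deg_{x_i}(v))/2. -/

import Mathlib

/-- The alternating extraction: `alt true` takes the entries at positions
`1,3,5,…` (1-based), `alt false` those at positions `2,4,6,…`. -/
def alt : Bool → List ℕ → List ℕ
  | _, [] => []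
  | true, a :: l => a :: alt false l
  | false, _ :: l => alt true l

theorem mem_of_mem_alt : ∀ (b : Bool) (l : List ℕ) (x : ℕ), x ∈ alt b l → x ∈ l := by
  intro b l
  induction l generalizing b with
  | nil => cases b <;> simp [alt]
  | cons a t ih =>
    intro x hx
    cases b with
    | true =>
      simp only [alt, List.mem_cons] at hx
      rcases hx with rfl | hx
      · simp
      · exact List.mem_cons_of_mem _ (ih false x hx)
    | false =>
      exact List.mem_cons_of_mem _ (ih true x (by simpa [alt] using hx))

theorem alt_key : ∀ l : List ℕ, l.Pairwise (· ≤ ·) →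
    (∀ i, (alt true l).count i ≤ (l.count i + 1) / 2 ∧
      (alt false l).count i ≤ (l.count i + 1) / 2) ∧
    (∀ a, (∀ x ∈ l, a ≤ x) → (alt false l).count a ≤ l.count a / 2) := by
  intro l
  induction l with
  | nil => simp [alt]
  | cons a t ih =>
    intro hs
    obtain ⟨hat, hts⟩ := List.pairwise_cons.mp hs
    obtain ⟨ih1, ih2⟩ := ih hts
    constructor
    · intro i
      constructor
      · show (a :: alt false t).count i ≤ _
        by_cases h : i = a
        · subst h
          have h2 := ih2 i hat
          simp only [List.count_cons_self]
          omega
        · have h1 := (ih1 i).2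
          simp only [List.count_cons_of_ne (Ne.symm h)]
          exact h1
      · show (alt true t).count i ≤ _
        have h1 := (ih1 i).1
        have : t.count i ≤ (a :: t).count i := by
          by_cases h : i = a <;>
            simp [List.count_cons, h]
        omega
    · intro a' ha'
      show (alt true t).count a' ≤ (a :: t).count a' / 2
      by_cases h : a' = a
      · subst h
        have h1 := (ih1 a').1
        simp only [List.count_cons_self]
        omega
      · have hle : a' ≤ a := ha' a (List.mem_cons_self (a := a) (l := t))
        have hnot : a' ∉ t := fun hm => h (le_antisymm hle (hat a' hm))
        have hnot' : a' ∉ alt true t := fun hm => hnot (mem_of_mem_alt true t a' hm)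
        simp [List.count_eq_zero_of_not_mem hnot']

/-- (Veronese type case, `t = 0`.) If `u, v` are monomials of
degree `d` in `n` variables (encoded as weakly increasing lists of indices,
exponents being multiplicities) with all exponents at most `c`, and `w` is the
weakly increasing arrangement of `uv`, then both sorted monomials
`alt true w = x_{i₁}x_{i₃}⋯x_{i_{2d-1}}` and `alt false w = x_{i₂}x_{i₄}⋯x_{i_{2d}}`
have all exponents at most `c`; indeed each of their exponents is at most
`⌈(deg_{x_i} u + deg_{x_i} v)/2⌉`. -/
theorem stmt_2 (c n d : ℕ) (u v : List ℕ)
    (hud : u.length = d) (hvd : v.length = d)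
    (hus : u.Pairwise (· ≤ ·)) (hvs : v.Pairwise (· ≤ ·))
    (hun : ∀ i ∈ u, 1 ≤ i ∧ i ≤ n) (hvn : ∀ i ∈ v, 1 ≤ i ∧ i ≤ n)
    (huc : ∀ i, u.count i ≤ c) (hvc : ∀ i, v.count i ≤ c)
    (w : List ℕ) (hw : (↑w : Multiset ℕ) = (↑u : Multiset ℕ) + (↑v : Multiset ℕ))
    (hws : w.Pairwise (· ≤ ·)) :
    (∀ i, (alt true w).count i ≤ (u.count i + v.count i + 1) / 2 ∧
        (alt false w).count i ≤ (u.count i + v.count i + 1) / 2) ∧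
    (∀ i, (alt true w).count i ≤ c ∧ (alt false w).count i ≤ c) := by
  have hcount : ∀ i, w.count i = u.count i + v.count i := by
    intro i
    have := congrArg (fun m => Multiset.count i m) hw
    simpa using this
  obtain ⟨h1, _⟩ := alt_key w hws
  constructor
  · intro i
    have := h1 i
    rw [hcount i] at this
    exact this
  · intro i
    have := h1 i
    have hu := huc i
    have hv := hvc i
    rw [hcount i] at this
    omega
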